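/- The meromorphic function w(z) = 1/(e^z + 1) satisfies the equation w'(z) = w(z)·( (w(z)² + (2e/(1−e))·w(z) − e/(1−e)) / (w(z) + e/(1−e)) − w(z+1) ) at every z ∈ ℂ where e^z + 1 ≠ 0 and w(z) + e/(1−e) ≠ 0. -/

import Mathlib

set_option maxHeartbeats 1000000 in
theorem stmt3 (w : ℂ → ℂ) (e : ℝ) (he : e = Real.exp 1)
    (hw : ∀ z : ℂ, w z = 1 / (Complex.exp z + 1)) :
    ∀ z : ℂ, Complex.exp z + 1 ≠ 0 → w z + (e : ℂ) / (1 - e) ≠ 0 →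
      deriv w z = w z *
        ((w z ^ 2 + (2 * e / (1 - e)) * w z - (e : ℂ) / (1 - e)) / (w z + (e : ℂ) / (1 - e))
          - w (z + 1)) := by
  intro z h1 h2
  have hwf : w = fun z => (Complex.exp z + 1)⁻¹ := by
    funext t; rw [hw t, one_div]
  have hE : (e : ℂ) = Complex.exp 1 := by
    rw [he, Complex.ofReal_exp, Complex.ofReal_one]
  have hEne : (e : ℂ) ≠ 0 := by rw [hE]; exact Complex.exp_ne_zero 1
  have he1 : (1 : ℝ) < e := by
    rw [he]; nlinarith [Real.add_one_le_exp (1 : ℝ)]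
  have h1e : (1 : ℂ) - e ≠ 0 := by
    intro h
    have : (1 : ℝ) - e = 0 := by exact_mod_cast h
    linarith
  -- derivative
  have hd : HasDerivAt w (-(Complex.exp z) / (Complex.exp z + 1) ^ 2) z := by
    rw [hwf]
    have h := ((Complex.hasDerivAt_exp z).add_const 1).inv h1
    exact h
  rw [hd.deriv]
  -- exp(z+1)
  have hexp : Complex.exp (z + 1) = Complex.exp z * e := by
    rw [Complex.exp_add, hE]
  -- exp(z+1)+1 ≠ 0
  have h3 : Complex.exp (z + 1) + 1 ≠ 0 := by
    intro h
    apply h2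
    have hx : Complex.exp z = -(1 / (e : ℂ)) := by
      have h1e' : (-1 : ℂ) + e ≠ 0 := by
        intro hh; apply h1e; linear_combination -hh
      field_simp at h ⊢
      rw [hexp] at h
      linear_combination h
    rw [hw z, hx]
    have h1e' : (-1 : ℂ) + e ≠ 0 := by
      intro hh; apply h1e; linear_combination -hh
    field_simp
    ring
  have h4 : Complex.exp z * (e : ℂ) + 1 ≠ 0 := by rwa [hexp] at h3
  set X := Complex.exp z with hX
  rw [hw z] at h2
  rw [hw z, hw (z + 1), hexp]
  have key : (1 / (X + 1)) ^ 2 + (2 * e / (1 - e)) * (1 / (X + 1)) - (e : ℂ) / (1 - e)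
      = ((1 - e * X ^ 2) / ((X + 1) * (X * e + 1))) * (1 / (X + 1) + (e : ℂ) / (1 - e)) := by
    field_simp
    ring
  rw [key, mul_div_assoc, div_self h2, mul_one]
  rw [← hX]
  field_simp
  ring
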